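/- Let K ⊂ ℂ be a totally imaginary number field of degree 2d ≥ 4 and let l ∈ K[x₁,x₂,x₃] be a linear form with sufficiently general coefficients. Then the norm form f = N_{K/ℚ}(l) has exactly d zeros in real projective plane ℙ²(ℝ): they are the common projective zeros of the conjugate linear forms σ(l) and its coefficientwise complex conjugate, as σ ranges over the d conjugate pairs of embeddings of K into ℂ. -/
import Mathlib


set_option synthInstance.maxHeartbeats 1000000
set_option maxHeartbeats 2000000

open MvPolynomial

lemma degOne (m : Fin 3 →₀ ℕ) (h : m.degree = 1) : ∃ j : Fin 3, m = Finsupp.single j 1 := by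
  have hs : m 0 + m 1 + m 2 = 1 := by
    have : ∑ i : Fin 3, m i = 1 := by
      rw [← h, Finsupp.degree]
      exact (Finset.sum_subset (Finset.subset_univ _)
        (fun i _ hi => Finsupp.notMem_support_iff.mp hi)).symm
    simpa [Fin.sum_univ_three] using this
  have hcase : (m 0 = 1 ∧ m 1 = 0 ∧ m 2 = 0) ∨ (m 0 = 0 ∧ m 1 = 1 ∧ m 2 = 0)
      ∨ (m 0 = 0 ∧ m 1 = 0 ∧ m 2 = 1) := by omega
  rcases hcase with ⟨h0,h1,h2⟩|⟨h0,h1,h2⟩|⟨h0,h1,h2⟩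
  · exact ⟨0, by ext i; fin_cases i <;> simp [Finsupp.single_apply, h0, h1, h2]⟩
  · exact ⟨1, by ext i; fin_cases i <;> simp [Finsupp.single_apply, h0, h1, h2]⟩
  · exact ⟨2, by ext i; fin_cases i <;> simp [Finsupp.single_apply, h0, h1, h2]⟩

lemma linear_decomp {R : Type*} [CommRing R] (p : MvPolynomial (Fin 3) R)
    (hp : p.IsHomogeneous 1) :
    p = ∑ i : Fin 3, (C (coeff (Finsupp.single i 1) p) * X i) := by
  ext m
  rw [coeff_sum]
  by_cases hm : ∃ j : Fin 3, m = Finsupp.single j 1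
  · obtain ⟨j, rfl⟩ := hm
    rw [Finset.sum_eq_single j]
    · simp [coeff_C_mul, coeff_X']
    · intro i _ hij
      rw [coeff_C_mul, coeff_X', if_neg (fun h => hij (Finsupp.single_left_injective one_ne_zero h)), mul_zero]
    · simp
  · have hz : coeff m p = 0 := by
      by_contra hne
      have hdeg : m.degree = 1 := by
        by_contra hdne
        exact hne (hp.coeff_eq_zero hdne)
      exact hm (degOne m hdeg)
    rw [hz]
    symm
    apply Finset.sum_eq_zero
    intro i _
    rw [coeff_C_mul, coeff_X', if_neg (fun h => hm ⟨i, h.symm⟩), mul_zero]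



/-- Let `K ⊂ ℂ` be a totally imaginary number field of degree `2d ≥ 4` and let
`l ∈ K[x₁,x₂,x₃]` be a linear form with sufficiently general coefficients. Then
the norm form `f = N_{K/ℚ}(l)` has exactly `d` zeros in the real projective plane
`ℙ²(ℝ)`, namely the common projective zeros of a conjugate form `σ(l)` and its
coefficientwise complex conjugate `conj ∘ σ(l)`. -/
theorem statement5 (d : ℕ) (hd : 2 ≤ d) (K : IntermediateField ℚ ℂ)
    (hdeg : Module.finrank ℚ K = 2 * d)
    (himag : IsEmpty (K →+* ℝ))
    (l : MvPolynomial (Fin 3) K) (hl : l.IsHomogeneous 1)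
    (hgen : ∀ σ₁ σ₂ σ₃ : K →+* ℂ, σ₁ ≠ σ₂ → σ₁ ≠ σ₃ → σ₂ ≠ σ₃ →
      ∀ v : Fin 3 → ℂ, v ≠ 0 →
        ¬ (eval v (map σ₁ l) = 0 ∧ eval v (map σ₂ l) = 0 ∧ eval v (map σ₃ l) = 0))
    (f : MvPolynomial (Fin 3) ℚ)
    (hf : map (algebraMap ℚ ℂ) f = ∏ᶠ σ : K →+* ℂ, map σ l) :
    Nat.card {P : Projectivization ℝ (Fin 3 → ℝ) |
        eval P.rep (map (algebraMap ℚ ℝ) f) = 0} = d ∧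
    {P : Projectivization ℝ (Fin 3 → ℝ) | eval P.rep (map (algebraMap ℚ ℝ) f) = 0} =
      {P : Projectivization ℝ (Fin 3 → ℝ) | ∃ σ : K →+* ℂ,
        eval (fun i => (P.rep i : ℂ)) (map σ l) = 0 ∧
        eval (fun i => (P.rep i : ℂ)) (map ((starRingEnd ℂ).comp σ) l) = 0} := by
  classical
  haveI : FiniteDimensional ℚ K := FiniteDimensional.of_finrank_pos (by rw [hdeg]; omega)
  haveI : NumberField K := ⟨⟩
  have hcard : Fintype.card (K →+* ℂ) = 2 * d := by
    rw [NumberField.Embeddings.card K ℂ, hdeg]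
  -- evaluation formula
  have heval : ∀ (σ : K →+* ℂ) (v : Fin 3 → ℂ),
      eval v (map σ l) = ∑ i : Fin 3, σ (coeff (Finsupp.single i 1) l) * v i := by
    intro σ v
    conv_lhs => rw [linear_decomp l hl, map_sum (map σ : MvPolynomial (Fin 3) K →+* MvPolynomial (Fin 3) ℂ), eval_sum]
    refine Finset.sum_congr rfl fun i _ => ?_
    simp
  -- coercion of nonzero real vectors
  have hcoe0 : ∀ v : Fin 3 → ℝ, v ≠ 0 → (fun i => (v i : ℂ)) ≠ 0 := by
    intro v hv h
    apply hv
    funext i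
    have := congrFun h i
    simpa using this
  -- conjugation is fixed point free
  have hcne : ∀ σ : K →+* ℂ, (starRingEnd ℂ).comp σ ≠ σ := by
    intro σ h
    refine himag.false ?_
    have him : ∀ x : K, (σ x).im = 0 := by
      intro x
      have := congrArg (fun τ : K →+* ℂ => τ x) h
      simp only [RingHom.coe_comp, Function.comp_apply] at this
      have h2 := congrArg Complex.im this
      simp only [Complex.conj_im] at h2
      linarith
    exact {
      toFun := fun x => (σ x).re
      map_one' := by simp
      map_mul' := fun x y => by simp [Complex.mul_re, him]
      map_zero' := by simp
      map_add' := fun x y => by simp }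
  -- conjugate evaluation at real points
  have hconj : ∀ (σ : K →+* ℂ) (v : Fin 3 → ℝ),
      eval (fun i => (v i : ℂ)) (map ((starRingEnd ℂ).comp σ) l)
        = (starRingEnd ℂ) (eval (fun i => (v i : ℂ)) (map σ l)) := by
    intro σ v
    rw [heval, heval, map_sum]
    refine Finset.sum_congr rfl fun i _ => ?_
    simp [Complex.conj_ofReal]
  -- evaluation of f at real points
  have hfeval : ∀ v : Fin 3 → ℝ,
      ((eval v (map (algebraMap ℚ ℝ) f) : ℝ) : ℂ)
        = ∏ σ : K →+* ℂ, eval (fun i => (v i : ℂ)) (map σ l) := by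
    intro v
    have h1 : (algebraMap ℚ ℂ) = Complex.ofRealHom.comp (algebraMap ℚ ℝ) :=
      Subsingleton.elim _ _
    have h2 : ((eval v (map (algebraMap ℚ ℝ) f) : ℝ) : ℂ)
        = eval (fun i => (v i : ℂ)) (map (algebraMap ℚ ℂ) f) := by
      simp only [h1, eval_map]
      exact eval₂_comp_left Complex.ofRealHom (algebraMap ℚ ℝ) v f
    rw [h2, hf, finprod_eq_prod_of_fintype, map_prod]
  have hzero : ∀ v : Fin 3 → ℝ, (eval v (map (algebraMap ℚ ℝ) f) = 0 ↔
      ∃ σ : K →+* ℂ, eval (fun i => (v i : ℂ)) (map σ l) = 0) := by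
    intro v
    rw [← Complex.ofReal_eq_zero, hfeval, Finset.prod_eq_zero_iff]
    simp
  -- linearity helper
  have hlin : ∀ (σ : K →+* ℂ) (α β : ℂ) (x y : Fin 3 → ℂ),
      eval (fun i => α * x i + β * y i) (map σ l)
        = α * eval x (map σ l) + β * eval y (map σ l) := by
    intro σ α β x y
    simp only [heval, Finset.mul_sum, ← Finset.sum_add_distrib]
    refine Finset.sum_congr rfl fun i _ => ?_
    ring
  -- scaling helper
  have hscale : ∀ (σ : K →+* ℂ) (t : ℝ) (v : Fin 3 → ℝ),
      eval (fun i => ((t • v) i : ℂ)) (map σ l)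
        = (t : ℂ) * eval (fun i => (v i : ℂ)) (map σ l) := by
    intro σ t v
    simp only [heval, Finset.mul_sum, Pi.smul_apply, smul_eq_mul, Complex.ofReal_mul]
    refine Finset.sum_congr rfl fun i _ => ?_
    ring
  -- a third embedding always exists
  have hthird : ∀ σ τ : K →+* ℂ, ∃ ρ : K →+* ℂ, ρ ≠ σ ∧ ρ ≠ τ := by
    intro σ τ
    by_contra h
    push_neg at h
    have hsub : (Finset.univ : Finset (K →+* ℂ)) ⊆ {σ, τ} := by
      intro ρ _
      rcases Classical.em (ρ = σ) with h1 | h1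
      · simp [h1]
      · simp [h ρ h1]
    have := Finset.card_le_card hsub
    have h2 : ({σ, τ} : Finset (K →+* ℂ)).card ≤ 2 :=
      (Finset.card_insert_le _ _).trans (by simp)
    rw [Finset.card_univ, hcard] at this
    omega
  -- proportionality of common real zeros of one conjugate form
  have hprop : ∀ (σ : K →+* ℂ) (v w : Fin 3 → ℝ), v ≠ 0 →
      eval (fun i => (v i : ℂ)) (map σ l) = 0 →
      eval (fun i => (w i : ℂ)) (map σ l) = 0 →
      ∃ t : ℝ, w = t • v := by
    intro σ v w hv hvz hwz
    by_contra hnot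
    push_neg at hnot
    -- real linear independence
    have hind : ∀ s t : ℝ, s • v + t • w = 0 → s = 0 ∧ t = 0 := by
      intro s t hst
      by_cases ht : t = 0
      · subst ht
        simp only [smul_zero, zero_smul, add_zero] at hst
        rcases smul_eq_zero.mp hst with h | h
        · exact ⟨h, rfl⟩
        · exact absurd h hv
      · exfalso
        apply hnot (-s / t)
        funext i
        have := congrFun hst i
        simp only [Pi.add_apply, Pi.smul_apply, smul_eq_mul, Pi.zero_apply] at this
        simp only [Pi.smul_apply, smul_eq_mul]
        field_simp
        linarith
    -- complex linear independence
    have hindC : ∀ α β : ℂ, (∀ i, α * (v i : ℂ) + β * (w i : ℂ) = 0) → α = 0 ∧ β = 0 := by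
      intro α β h
      have hre : α.re • v + β.re • w = 0 := by
        funext i
        have := congrArg Complex.re (h i)
        simpa [Complex.add_re, Complex.mul_re] using this
      have him : α.im • v + β.im • w = 0 := by
        funext i
        have := congrArg Complex.im (h i)
        simpa [Complex.add_im, Complex.mul_im] using this
      obtain ⟨h1, h2⟩ := hind _ _ hre
      obtain ⟨h3, h4⟩ := hind _ _ him
      exact ⟨Complex.ext h1 h3, Complex.ext h2 h4⟩
    obtain ⟨τ, hτσ, hτc⟩ := hthird σ ((starRingEnd ℂ).comp σ)
    have hσc : σ ≠ (starRingEnd ℂ).comp σ := (hcne σ).symm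
    have hgen' := hgen σ ((starRingEnd ℂ).comp σ) τ hσc hτσ.symm hτc.symm
    set A := eval (fun i => (v i : ℂ)) (map τ l) with hA
    set B := eval (fun i => (w i : ℂ)) (map τ l) with hB
    by_cases hA0 : A = 0
    · exact hgen' (fun i => (v i : ℂ)) (hcoe0 v hv)
        ⟨hvz, by rw [hconj, hvz, map_zero], hA0⟩
    · -- u := B • v - A • w is a nonzero common zero
      set u : Fin 3 → ℂ := fun i => B * (v i : ℂ) + (-A) * (w i : ℂ) with hu
      have hu0 : u ≠ 0 := by
        intro h
        apply hA0
        have : ∀ i, B * (v i : ℂ) + (-A) * (w i : ℂ) = 0 := fun i => congrFun h i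
        have := (hindC B (-A) this).2
        simpa [neg_eq_zero] using this
      refine hgen' u hu0 ⟨?_, ?_, ?_⟩
      · rw [hu, hlin, hvz, hwz]; ring
      · rw [hu, hlin, hconj, hconj, hvz, hwz]; simp
      · rw [hu, hlin, ← hA, ← hB]; ring
  -- existence of a nonzero real zero for each embedding
  have hex : ∀ σ : K →+* ℂ, ∃ v : Fin 3 → ℝ, v ≠ 0 ∧
      eval (fun i => (v i : ℂ)) (map σ l) = 0 := by
    intro σ
    set T : (Fin 3 → ℝ) →ₗ[ℝ] ℂ := {
      toFun := fun v => ∑ i : Fin 3, σ (coeff (Finsupp.single i 1) l) * (v i : ℂ)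
      map_add' := by
        intro x y
        simp only [Pi.add_apply, Complex.ofReal_add, mul_add, Finset.sum_add_distrib]
      map_smul' := by
        intro r x
        simp only [Pi.smul_apply, smul_eq_mul, Complex.ofReal_mul, RingHom.id_apply,
          Complex.real_smul, Finset.mul_sum]
        refine Finset.sum_congr rfl fun i _ => ?_
        ring } with hT
    have hker : LinearMap.ker T ≠ ⊥ := by
      intro h
      have hinj := LinearMap.ker_eq_bot.mp h
      have := LinearMap.finrank_le_finrank_of_injective hinj
      rw [Module.finrank_pi, Complex.finrank_real_complex] at this
      simp at this
    obtain ⟨v, hvmem, hv0⟩ := Submodule.ne_bot_iff _ |>.mp hker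
    refine ⟨v, hv0, ?_⟩
    rw [heval]
    exact hvmem
  -- the canonical projective point of each embedding
  have hPex : ∀ σ : K →+* ℂ, ∃ P : Projectivization ℝ (Fin 3 → ℝ),
      ∀ Q : Projectivization ℝ (Fin 3 → ℝ),
        (eval (fun i => (Q.rep i : ℂ)) (map σ l) = 0 ↔ Q = P) := by
    intro σ
    obtain ⟨v, hv, hvz⟩ := hex σ
    refine ⟨Projectivization.mk ℝ v hv, fun Q => ⟨fun hQ => ?_, fun hQ => ?_⟩⟩
    · obtain ⟨t, htw⟩ := hprop σ v Q.rep hv hvz hQ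
      have ht0 : t ≠ 0 := by
        intro h
        exact Q.rep_nonzero (by rw [htw, h, zero_smul])
      rw [← Q.mk_rep]
      exact (Projectivization.mk_eq_mk_iff' ℝ _ _ Q.rep_nonzero hv).mpr ⟨t, htw.symm⟩
    · obtain ⟨c, hc⟩ := Projectivization.exists_smul_eq_mk_rep ℝ v hv
      rw [hQ, ← hc, Units.smul_def, hscale, hvz, mul_zero]
  choose P hP using hPex
  -- identification of the zero set
  have hSrange : ∀ Q : Projectivization ℝ (Fin 3 → ℝ),
      eval Q.rep (map (algebraMap ℚ ℝ) f) = 0 ↔ ∃ σ : K →+* ℂ, Q = P σ := by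
    intro Q
    rw [hzero]
    exact exists_congr fun σ => hP σ Q
  -- each P σ is a zero of σ and its conjugate
  have hPzero : ∀ σ : K →+* ℂ, eval (fun i => ((P σ).rep i : ℂ)) (map σ l) = 0 :=
    fun σ => (hP σ (P σ)).mpr rfl
  -- fibers of P
  have hPfiber : ∀ σ τ : K →+* ℂ, P τ = P σ ↔ τ = σ ∨ τ = (starRingEnd ℂ).comp σ := by
    intro σ τ
    constructor
    · intro h
      by_contra hcon
      push_neg at hcon
      obtain ⟨h1, h2⟩ := hcon
      refine hgen σ ((starRingEnd ℂ).comp σ) τ (hcne σ).symm h1.symm h2.symm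
        (fun i => ((P σ).rep i : ℂ)) (hcoe0 _ (P σ).rep_nonzero) ⟨hPzero σ, ?_, ?_⟩
      · rw [hconj, hPzero σ, map_zero]
      · exact (hP τ (P σ)).mpr h.symm
    · rintro (rfl | rfl)
      · rfl
      · symm
        refine (hP ((starRingEnd ℂ).comp σ) (P σ)).mp ?_
        rw [hconj, hPzero σ, map_zero]
  -- counting
  have himg : ({Q : Projectivization ℝ (Fin 3 → ℝ) |
      eval Q.rep (map (algebraMap ℚ ℝ) f) = 0} : Set _)
      = ↑(Finset.univ.image P) := by
    ext Q
    simp only [Set.mem_setOf_eq, hSrange, Finset.coe_image, Set.mem_image,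
      Finset.mem_coe, Finset.mem_univ, Finset.coe_univ, Set.image_univ, Set.mem_range]
    exact exists_congr fun σ => eq_comm
  have hcount : (Finset.univ.image P).card = d := by
    have hfib := Finset.card_eq_sum_card_fiberwise
      (f := P) (s := Finset.univ) (t := Finset.univ.image P)
      (fun σ _ => Finset.mem_image_of_mem P (Finset.mem_univ σ))
    have hfib2 : ∀ Q ∈ Finset.univ.image P,
        (Finset.univ.filter (fun σ => P σ = Q)).card = 2 := by
      intro Q hQ
      obtain ⟨σ₀, _, rfl⟩ := Finset.mem_image.mp hQ
      have : Finset.univ.filter (fun σ => P σ = P σ₀)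
          = {σ₀, (starRingEnd ℂ).comp σ₀} := by
        ext τ
        simp [Finset.mem_filter, hPfiber σ₀ τ]
      rw [this, Finset.card_insert_of_notMem (by simpa using (hcne σ₀).symm),
        Finset.card_singleton]
    rw [Finset.card_univ, hcard, Finset.sum_congr rfl hfib2, Finset.sum_const,
      smul_eq_mul] at hfib
    omega
  constructor
  · rw [himg, Nat.card_coe_set_eq, Set.ncard_coe_finset, hcount]
  · ext Q
    simp only [Set.mem_setOf_eq, hzero]
    constructor
    · rintro ⟨σ, hσ⟩
      exact ⟨σ, hσ, by rw [hconj, hσ, map_zero]⟩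
    · rintro ⟨σ, hσ, -⟩
      exact ⟨σ, hσ⟩
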